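/- Let π be an (n,m)-piecewise affine permutation with principal product P ≡ 1 (mod n) and principal sum S. Then for every x ∈ [1,n] divisible by m, the length of the cycle of π containing x equals m·n/gcd(n, S). -/

import Mathlib

/-- `psi k x` is the representative of `x` mod `k` in `[1, k]`. -/
def psi (k x : ℕ) : ℕ := if x % k = 0 then k else x % k

/-- `π` is an `(n,m)`-piecewise affine permutation of `[1,n]` with parameters
`(a, b, c)`: it permutes `[1,n]` (and is the identity elsewhere), the entries of
`a, b` lie in `[1,n]`, the entries of `c` form a permutation of `[1,m]`, and for
`x ∈ [1,n]` with `Ψ_m(x) = c_i` one has `π(x) = Ψ_n(a_i x + b_i)` and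
`Ψ_m(π(x)) = c_{i+1}`, indices cyclic modulo `m`. -/
def IsPAP (n m : ℕ) [NeZero m] (a b c : Fin m → ℕ) (π : ℕ → ℕ) : Prop :=
  Set.BijOn π (Set.Icc 1 n) (Set.Icc 1 n) ∧
  (∀ x : ℕ, x ∉ Set.Icc 1 n → π x = x) ∧
  (∀ i, a i ∈ Set.Icc 1 n) ∧ (∀ i, b i ∈ Set.Icc 1 n) ∧
  (∀ i, c i ∈ Set.Icc 1 m) ∧ Function.Injective c ∧
  ∀ x ∈ Set.Icc 1 n, ∀ i, psi m x = c i →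
    π x = psi n (a i * x + b i) ∧ psi m (π x) = c (i + 1)

lemma psi_mem {k : ℕ} (hk : 0 < k) (x : ℕ) : psi k x ∈ Set.Icc 1 k := by
  unfold psi
  split
  · exact ⟨hk, le_refl k⟩
  · exact ⟨Nat.one_le_iff_ne_zero.mpr (by assumption), (Nat.mod_lt x hk).le⟩

lemma psi_mod (k x : ℕ) : psi k x % k = x % k := by
  unfold psi
  split
  · simp [*]
  · exact Nat.mod_mod_of_dvd x dvd_rfl

lemma psi_eq_self {k x : ℕ} (hx : x ∈ Set.Icc 1 k) : psi k x = x := by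
  obtain ⟨h1, h2⟩ := hx
  unfold psi
  rcases eq_or_lt_of_le h2 with rfl | hlt
  · simp
  · rw [Nat.mod_eq_of_lt hlt]
    simp; omega

lemma psi_inj {k : ℕ} (hk : 0 < k) {u v : ℕ} : psi k u = psi k v ↔ u % k = v % k := by
  constructor
  · intro h
    have := psi_mod k u
    rw [h, psi_mod] at this
    exact this.symm
  · intro h; unfold psi; rw [h]

lemma psi_eq_top_iff {k : ℕ} (hk : 0 < k) {x : ℕ} : psi k x = k ↔ k ∣ x := by
  unfold psi
  split
  · simp [Nat.dvd_of_mod_eq_zero, *]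
  · constructor
    · intro h; exact absurd h (by have := Nat.mod_lt x hk; omega)
    · intro h; exact absurd ((Nat.dvd_iff_mod_eq_zero).mp h) (by assumption)

open Fin.NatCast in
/-- If the principal product satisfies `P ≡ 1 (mod n)`, the cycle of `π`
containing a multiple `x` of `m` has length `m·n/gcd(n,S)`. -/
theorem pap_cycle_length_P_one (n m : ℕ) [NeZero m] (hm : 1 < m) (hmn : m ∣ n)
    (a b c : Fin m → ℕ) (π : ℕ → ℕ) (hpap : IsPAP n m a b c π)
    (P S : ℕ) (hP : P = ∏ i, a i) (hSmem : S ∈ Set.Icc 1 n)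
    (hS : ∀ x ∈ Set.Icc 1 n, m ∣ x → π^[m] x = psi n (P * x + S))
    (hP1 : P ≡ 1 [MOD n]) :
    ∀ x ∈ Set.Icc 1 n, m ∣ x →
      Function.minimalPeriod π x = m * (n / Nat.gcd n S) := by
  obtain ⟨hbij, hout, ha, hb, hc, hcinj, hstep⟩ := hpap
  intro x hx hmx
  have hm0 : 0 < m := by omega
  have hn0 : 0 < n := by obtain ⟨h1, h2⟩ := hx; omega
  -- find i0 with c i0 = m
  obtain ⟨i0, hi0⟩ : ∃ i, c i = m := by
    have h1 : Finset.image c Finset.univ ⊆ Finset.Icc 1 m := by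
      intro y hy
      simp only [Finset.mem_image, Finset.mem_univ, true_and] at hy
      obtain ⟨i, rfl⟩ := hy
      simpa [Finset.mem_Icc] using hc i
    have h2 : (Finset.Icc 1 m).card ≤ (Finset.image c Finset.univ).card := by
      rw [Finset.card_image_of_injective _ hcinj, Finset.card_univ, Fintype.card_fin,
        Nat.card_Icc]
      omega
    have heq := Finset.eq_of_subset_of_card_le h1 h2
    have : m ∈ Finset.image c Finset.univ := by
      rw [heq, Finset.mem_Icc]; omega
    simpa using this
  have hpsix : psi m x = m := (psi_eq_top_iff hm0).mpr hmx
  -- residues along the orbit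
  have key : ∀ j : ℕ, π^[j] x ∈ Set.Icc 1 n ∧ psi m (π^[j] x) = c (i0 + (j : Fin m)) := by
    intro j
    induction j with
    | zero => simpa using ⟨hx, by rw [hpsix, hi0]⟩
    | succ j ih =>
      obtain ⟨hmem, hps⟩ := ih
      have hst := hstep _ hmem (i0 + (j : Fin m)) hps
      rw [Function.iterate_succ_apply']
      refine ⟨hbij.mapsTo hmem, ?_⟩
      rw [hst.2]
      congr 1
      push_cast
      rw [add_assoc]
  -- any period is a multiple of m
  have hmult : ∀ j : ℕ, π^[j] x = x → m ∣ j := by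
    intro j hj
    have h1 := (key j).2
    rw [hj, hpsix] at h1
    have h1' : c (i0 + (j : Fin m)) = c i0 := by rw [hi0]; exact h1.symm
    have h2 : i0 + (j : Fin m) = i0 := hcinj h1'
    have h3 : (j : Fin m) = 0 := by
      have := add_left_cancel (a := i0) (b := (j : Fin m)) (c := 0) (by simpa using h2)
      exact this
    exact Fin.natCast_eq_zero.mp h3
  -- multiples of m along the orbit are given by the affine formula
  have hdvd_iter : ∀ k : ℕ, m ∣ π^[m * k] x := by
    intro k
    have h1 := (key (m * k)).2
    have h2 : ((m * k : ℕ) : Fin m) = 0 := Fin.natCast_eq_zero.mpr ⟨k, rfl⟩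
    rw [h2, add_zero, hi0] at h1
    exact (psi_eq_top_iff hm0).mp h1
  have keyB : ∀ k : ℕ, π^[m * k] x = psi n (x + k * S) := by
    intro k
    induction k with
    | zero => simpa using (psi_eq_self hx).symm
    | succ k ih =>
      have hy : π^[m * k] x ∈ Set.Icc 1 n := (key (m * k)).1
      have hym : m ∣ π^[m * k] x := hdvd_iter k
      have hit : π^[m * (k + 1)] x = π^[m] (π^[m * k] x) := by
        rw [show m * (k + 1) = m + m * k by ring, Function.iterate_add_apply]
      rw [hit, hS _ hy hym, psi_inj hn0]
      have hyx : π^[m * k] x ≡ x + k * S [MOD n] := by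
        rw [ih]
        show psi n (x + k * S) % n = (x + k * S) % n
        exact psi_mod n _
      calc P * π^[m * k] x + S ≡ 1 * (x + k * S) + S [MOD n] :=
            Nat.ModEq.add_right S (Nat.ModEq.mul hP1 hyx)
        _ = x + (k + 1) * S := by ring
  set g := Nat.gcd n S with hg
  have hg0 : 0 < g := Nat.gcd_pos_of_pos_left S hn0
  have hgd : g ∣ n := Nat.gcd_dvd_left n S
  have hgs : g ∣ S := Nat.gcd_dvd_right n S
  have hd0 : 0 < n / g := Nat.div_pos (Nat.le_of_dvd hn0 hgd) hg0
  have hfix : ∀ k : ℕ, π^[m * k] x = x ↔ (n / g) ∣ k := by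
    intro k
    rw [keyB k]
    constructor
    · intro h
      have : (x + k * S) % n = x % n := by
        rw [← psi_mod n (x + k * S), h]
      have hns : n ∣ k * S := by
        have h2 : x + k * S ≡ x + 0 [MOD n] := by show (x + k * S) % n = (x + 0) % n; rw [add_zero]; exact this
        have h3 : k * S ≡ 0 [MOD n] := Nat.ModEq.add_left_cancel' x (by simpa using h2)
        exact (Nat.modEq_zero_iff_dvd).mp h3
      -- n ∣ k * S → n/g ∣ k
      have hcop : Nat.Coprime (n / g) (S / g) := Nat.coprime_div_gcd_div_gcd hg0
      have h4 : (n / g) * g ∣ k * ((S / g) * g) := by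
        rw [Nat.div_mul_cancel hgd, Nat.div_mul_cancel hgs]
        exact hns
      have h4' : (n / g) * g ∣ k * (S / g) * g := by rw [mul_assoc]; exact h4
      have h5 : (n / g) ∣ k * (S / g) := (Nat.mul_dvd_mul_iff_right hg0).mp h4'
      exact hcop.dvd_of_dvd_mul_right h5
    · intro ⟨t, ht⟩
      have : n ∣ k * S := by
        rcases hgs with ⟨s, hs⟩
        refine ⟨t * s, ?_⟩
        rw [ht, hs]
        rw [show n / g * t * (g * s) = (n / g * g) * (t * s) by ring,
          Nat.div_mul_cancel hgd]
      obtain ⟨t, ht2⟩ := this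
      nth_rewrite 2 [← psi_eq_self hx]
      rw [psi_inj hn0, ht2]
      exact Nat.add_mul_mod_self_left x n t
  have hper : Function.IsPeriodicPt π (m * (n / g)) x := (hfix (n / g)).mpr dvd_rfl
  have hpos : 0 < m * (n / g) := Nat.mul_pos hm0 hd0
  have hTd : Function.minimalPeriod π x ∣ m * (n / g) := hper.minimalPeriod_dvd
  have hTfix : π^[Function.minimalPeriod π x] x = x := Function.iterate_minimalPeriod
  obtain ⟨k, hk⟩ := hmult _ hTfix
  have hk2 : (n / g) ∣ k := (hfix k).mp (by rw [← hk]; exact hTfix)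
  have hdT : m * (n / g) ∣ Function.minimalPeriod π x := by
    rw [hk]
    exact mul_dvd_mul_left m hk2
  exact Nat.dvd_antisymm hTd hdT
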